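/- The generating function ∑ μ^{ℓ_a(π)} ν^{ℓ_b(π)} q^{|π|} over all partitions π whose parts are congruent to a or b modulo k equals ∑_{m,h,i ≥ 0} μ^{m-h-i} ν^{h+i} q^{ma + kh² + (b-a)(h+i)} / (q^k; q^k)_m · [h+i choose h]_{q^k} · [m-h-i choose h]_{q^k}. -/

import Mathlib

set_option maxHeartbeats 1000000
noncomputable section

/-- The q-Pochhammer symbol (q^t; q^t)_n as a polynomial in q. -/
def qpoch (t n : ℕ) : Polynomial ℚ :=
  ∏ i ∈ Finset.range n, (1 - Polynomial.X ^ (t * (i + 1)))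

/-- The Gaussian binomial coefficient [A choose B] in base q^t:
(q^t;q^t)_A / ((q^t;q^t)_B (q^t;q^t)_{A-B}) when 0 ≤ B ≤ A, and 0 otherwise. -/
def gauss (t : ℕ) (A B : ℤ) : Polynomial ℚ :=
  if 0 ≤ B ∧ B ≤ A then
    qpoch t A.toNat / (qpoch t B.toNat * qpoch t (A - B).toNat)
  else 0
open Polynomial Finset

/-- Gaussian binomial by Pascal recursion. -/
def gb (t : ℕ) : ℕ → ℕ → Polynomial ℚ
  | _, 0 => 1
  | 0, _+1 => 0
  | n+1, s+1 => gb t n s + Polynomial.X ^ (t*(s+1)) * gb t n (s+1)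

@[simp] lemma gb_zero_right (t n : ℕ) : gb t n 0 = 1 := by cases n <;> rfl

lemma gb_succ (t n s : ℕ) :
    gb t (n+1) (s+1) = gb t n s + Polynomial.X ^ (t*(s+1)) * gb t n (s+1) := rfl

lemma gb_zero_of_lt (t : ℕ) : ∀ {n s : ℕ}, n < s → gb t n s = 0 := by
  intro n
  induction n with
  | zero => intro s hs; match s, hs with | s+1, _ => rfl
  | succ n ih =>
    intro s hs
    match s, hs with
    | s+1, hs =>
      rw [gb_succ, ih (by omega), ih (by omega)]
      ring

@[simp] lemma gb_self (t : ℕ) : ∀ n, gb t n n = 1 := by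
  intro n
  induction n with
  | zero => rfl
  | succ n ih => rw [gb_succ, ih, gb_zero_of_lt t (by omega : n < n + 1)]; ring

@[simp] lemma qpoch_zero (t : ℕ) : qpoch t 0 = 1 := by simp [qpoch]

lemma qpoch_succ (t n : ℕ) :
    qpoch t (n+1) = qpoch t n * (1 - Polynomial.X ^ (t*(n+1))) := by
  rw [qpoch, Finset.prod_range_succ]; rfl

lemma one_sub_X_pow_ne_zero {m : ℕ} (hm : 0 < m) :
    (1 - Polynomial.X ^ m : Polynomial ℚ) ≠ 0 := by
  intro h
  have := congrArg (fun p => Polynomial.coeff p 0) h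
  simp only [Polynomial.coeff_sub, Polynomial.coeff_one, Polynomial.coeff_X_pow,
    Polynomial.coeff_zero] at this
  rw [if_neg (by omega : ¬ (0 = m))] at this
  norm_num at this

lemma qpoch_ne_zero {t : ℕ} (ht : 0 < t) (n : ℕ) : qpoch t n ≠ 0 := by
  induction n with
  | zero => simp
  | succ n ih =>
    rw [qpoch_succ]
    exact mul_ne_zero ih (one_sub_X_pow_ne_zero (by positivity))

lemma gb_mul_qpoch {t : ℕ} (ht : 0 < t) :
    ∀ n h : ℕ, h ≤ n → gb t n h * (qpoch t h * qpoch t (n - h)) = qpoch t n := by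
  intro n
  induction n with
  | zero => intro h hh; interval_cases h; simp
  | succ n ih =>
    intro h hh
    match h with
    | 0 => simp
    | s+1 =>
      rcases Nat.lt_or_ge s n with hs | hs
      · -- s + 1 ≤ n
        have h1 := ih s (by omega)
        have h2 := ih (s+1) (by omega)
        have hq3 : qpoch t (n - s) = qpoch t (n-(s+1)) * (1 - X ^ (t*(n-s))) := by
          have e2 : n - s = (n - (s+1)) + 1 := by omega
          have e2' : n - (s+1) + 1 = n - s := by omega
          rw [← e2', qpoch_succ]
        have hq2 : qpoch t (s+1) = qpoch t s * (1 - X ^ (t*(s+1))) := qpoch_succ ..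
        rw [hq3] at h1
        rw [hq2] at h2
        have epow : X ^ (t * (s+1)) * X ^ (t * (n - s)) = (X : Polynomial ℚ) ^ (t * (n+1)) := by
          rw [← pow_add, ← Nat.mul_add, (by omega : s + 1 + (n - s) = n + 1)]
        rw [gb_succ, qpoch_succ t n, (by omega : n + 1 - (s+1) = n - s), hq3, hq2]
        linear_combination (1 - X ^ (t*(s+1))) * h1 +
          X ^ (t*(s+1)) * (1 - X ^ (t*(n-s))) * h2 - qpoch t n * epow
      · -- s + 1 = n + 1
        have : s = n := by omega
        subst this
        simp [gb_succ, gb_zero_of_lt t (by omega : s < s + 1)]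

lemma gb_symm {t : ℕ} (ht : 0 < t) {n h : ℕ} (hh : h ≤ n) :
    gb t n (n - h) = gb t n h := by
  have h1 := gb_mul_qpoch ht n h hh
  have h2 := gb_mul_qpoch ht n (n - h) (by omega)
  have e : n - (n - h) = h := by omega
  rw [e] at h2
  have : gb t n (n - h) * (qpoch t h * qpoch t (n - h)) =
      gb t n h * (qpoch t h * qpoch t (n - h)) := by
    rw [h1, ← h2]; ring
  exact mul_right_cancel₀ (mul_ne_zero (qpoch_ne_zero ht _) (qpoch_ne_zero ht _)) this

/-- second Pascal identity -/
lemma gb_succ' {t : ℕ} (ht : 0 < t) {n s : ℕ} (hs : s ≤ n) :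
    gb t (n+1) (s+1) = gb t n (s+1) + Polynomial.X ^ (t*(n-s)) * gb t n s := by
  rcases Nat.lt_or_ge s n with hlt | hge
  · have e0 : n + 1 - (s+1) = (n - (s+1)) + 1 := by omega
    calc gb t (n+1) (s+1) = gb t (n+1) ((n+1) - (s+1)) := (gb_symm ht (by omega)).symm
      _ = gb t (n+1) ((n - (s+1)) + 1) := by rw [e0]
      _ = gb t n (n - (s+1)) + X ^ (t * ((n - (s+1)) + 1)) * gb t n (n - (s+1) + 1) := gb_succ ..
      _ = gb t n (s+1) + X ^ (t*(n-s)) * gb t n s := by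
          have g1 : gb t n (n - (s+1)) = gb t n (s+1) := gb_symm ht (by omega)
          have g2 : gb t n (n - (s+1) + 1) = gb t n s := by
            rw [(by omega : n - (s+1) + 1 = n - s)]
            exact gb_symm ht (by omega)
          rw [g1, g2, (by omega : n - (s+1) + 1 = n - s)]
  · have : s = n := by omega
    subst this
    simp [gb_zero_of_lt t (by omega : s < s + 1)]

lemma gauss_eq_gb {t : ℕ} (ht : 0 < t) (A B : ℕ) :
    gauss t (A : ℤ) (B : ℤ) = gb t A B := by
  by_cases hBA : B ≤ A
  · rw [gauss, if_pos ⟨Int.ofNat_nonneg B, by exact_mod_cast hBA⟩]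
    rw [(by push_cast [hBA] ; ring : (A : ℤ) - B = ((A - B : ℕ) : ℤ)), Int.toNat_natCast,
      Int.toNat_natCast]
    rw [← gb_mul_qpoch ht A B hBA]
    exact mul_div_cancel_right₀ _ (mul_ne_zero (qpoch_ne_zero ht _) (qpoch_ne_zero ht _))
  · rw [gauss, if_neg (by push_cast; omega), gb_zero_of_lt t (by omega)]

open Polynomial Finset in
lemma choose2_succ (m : ℕ) : (m+1).choose 2 = m.choose 2 + m := by
  rw [Nat.choose_succ_succ, Nat.choose_one_right]
  show m + m.choose 2 = m.choose 2 + m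
  omega

open Polynomial Finset in
lemma choose2_add (j h : ℕ) : (j+h).choose 2 = j.choose 2 + h.choose 2 + j*h := by
  induction h with
  | zero => simp
  | succ h ih =>
    rw [← Nat.add_assoc, choose2_succ, choose2_succ, ih]
    ring

open Polynomial Finset in
/-- the finite q-binomial theorem -/
lemma GBT {t : ℕ} (ht : 0 < t) (w : Polynomial ℚ) (n : ℕ) :
    ∏ i ∈ range n, (1 + C ((Polynomial.X : Polynomial ℚ) ^ (t*i) * w) * Polynomial.X) =
      ∑ h ∈ range (n+1),
        C (gb t n h * (Polynomial.X : Polynomial ℚ) ^ (t * h.choose 2) * w ^ h) *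
          Polynomial.X ^ h := by
  induction n with
  | zero => simp
  | succ n ih =>
    have hB0 : ∀ s : ℕ, (fun h : ℕ =>
        match h with
        | 0 => (0 : Polynomial (Polynomial ℚ))
        | s+1 => C (gb t n s * (Polynomial.X : Polynomial ℚ) ^ (t * (s.choose 2 + n)) * w ^ (s+1)) *
            Polynomial.X ^ (s+1)) (s+1) =
        C (gb t n s * (Polynomial.X : Polynomial ℚ) ^ (t * (s.choose 2 + n)) * w ^ (s+1)) *
            Polynomial.X ^ (s+1) := fun s => rfl
    set A : ℕ → Polynomial (Polynomial ℚ) := fun h =>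
      C (gb t n h * (Polynomial.X : Polynomial ℚ) ^ (t * h.choose 2) * w ^ h) *
        Polynomial.X ^ h with hA
    set B : ℕ → Polynomial (Polynomial ℚ) := fun h =>
      match h with
      | 0 => 0
      | s+1 => C (gb t n s * (Polynomial.X : Polynomial ℚ) ^ (t * (s.choose 2 + n)) * w ^ (s+1)) *
          Polynomial.X ^ (s+1) with hB
    have step1 : ∀ h ∈ range (n+2),
        C (gb t (n+1) h * (Polynomial.X : Polynomial ℚ) ^ (t * h.choose 2) * w ^ h) *
          Polynomial.X ^ h = A h + B h := by
      intro h hh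
      match h with
      | 0 => simp [hA, hB]
      | s+1 =>
        have hs : s ≤ n := by simp at hh; omega
        rw [gb_succ' ht hs]
        have hexp : (Polynomial.X : Polynomial ℚ) ^ (t*(n-s)) *
            (Polynomial.X : Polynomial ℚ) ^ (t * (s+1).choose 2) =
            (Polynomial.X : Polynomial ℚ) ^ (t * (s.choose 2 + n)) := by
          rw [← pow_add, ← Nat.mul_add, choose2_succ]
          congr 1
          rw [Nat.mul_comm t, Nat.mul_comm t]
          congr 1
          omega
        rw [hB0 s]
        simp only [hA]
        have key : (gb t n (s+1) + (Polynomial.X:Polynomial ℚ) ^ (t*(n-s)) * gb t n s) *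
            (Polynomial.X:Polynomial ℚ) ^ (t * (s+1).choose 2) * w ^ (s+1) =
            gb t n (s+1) * (Polynomial.X:Polynomial ℚ) ^ (t * (s+1).choose 2) * w ^ (s+1) +
            gb t n s * (Polynomial.X:Polynomial ℚ) ^ (t * (s.choose 2 + n)) * w ^ (s+1) := by
          linear_combination (gb t n s * w^(s+1)) * hexp
        rw [key, map_add, add_mul]
    rw [Finset.prod_range_succ, ih, Finset.sum_congr rfl step1, Finset.sum_add_distrib]
    have hsumA : ∑ h ∈ range (n+2), A h = ∑ h ∈ range (n+1), A h := by
      rw [Finset.sum_range_succ]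
      have : A (n+1) = 0 := by
        simp [hA, gb_zero_of_lt t (by omega : n < n + 1)]
      rw [this, add_zero]
    have hsumB : ∑ h ∈ range (n+2), B h =
        ∑ h ∈ range (n+1), A h * (C ((Polynomial.X:Polynomial ℚ) ^ (t*n) * w) * Polynomial.X) := by
      rw [Finset.sum_range_succ']
      have hB00 : B 0 = 0 := rfl
      rw [hB00, add_zero]
      refine Finset.sum_congr rfl fun s _ => ?_
      rw [hB0 s]
      have hexp2 : gb t n s * (Polynomial.X:Polynomial ℚ) ^ (t * s.choose 2) * w ^ s *
          ((Polynomial.X:Polynomial ℚ) ^ (t*n) * w) =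
          gb t n s * (Polynomial.X:Polynomial ℚ) ^ (t * (s.choose 2 + n)) * w ^ (s+1) := by
        rw [Nat.mul_add, pow_add, pow_succ]
        ring
      simp only [hA]
      rw [show C (gb t n s * (Polynomial.X:Polynomial ℚ) ^ (t * s.choose 2) * w ^ s) *
          Polynomial.X ^ s * (C ((Polynomial.X:Polynomial ℚ) ^ (t*n) * w) * Polynomial.X) =
          C (gb t n s * (Polynomial.X:Polynomial ℚ) ^ (t * s.choose 2) * w ^ s *
            ((Polynomial.X:Polynomial ℚ) ^ (t*n) * w)) * Polynomial.X ^ (s+1) from by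
            simp only [map_mul, map_pow]; ring, hexp2]
    rw [hsumA, hsumB, mul_add, mul_one, Finset.sum_mul]

open Polynomial Finset in
lemma coeff_gbsum (c : ℕ → Polynomial ℚ) (M m : ℕ) :
    Polynomial.coeff (∑ p ∈ range M, C (c p) * Polynomial.X ^ p) m =
      if m ∈ range M then c m else 0 := by
  rw [Polynomial.finset_sum_coeff]
  rw [Finset.sum_congr rfl (fun p _ => by
    rw [Polynomial.C_mul_X_pow_eq_monomial, Polynomial.coeff_monomial])]
  exact Finset.sum_ite_eq' (range M) m c

open Polynomial Finset in
/-- q-Vandermonde in the needed form -/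
lemma vander {t : ℕ} (ht : 0 < t) (α β : ℕ) :
    ∑ h ∈ range (β+1), (Polynomial.X : Polynomial ℚ) ^ (t*h^2) * gb t β h * gb t α h
      = gb t (α+β) β := by
  have hP1 := GBT ht 1 (β+α)
  have hsplit : ∏ i ∈ range (β+α), (1 + C ((Polynomial.X : Polynomial ℚ) ^ (t*i) * 1) * Polynomial.X)
      = (∑ j ∈ range (β+1), C (gb t β j * (Polynomial.X:Polynomial ℚ) ^ (t * j.choose 2)) *
          Polynomial.X ^ j) *
        (∑ h ∈ range (α+1), C (gb t α h * (Polynomial.X:Polynomial ℚ) ^ (t * h.choose 2) *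
          ((Polynomial.X:Polynomial ℚ) ^ (t*β)) ^ h) * Polynomial.X ^ h) := by
    rw [Finset.prod_range_add]
    congr 1
    · have := GBT ht 1 β
      simpa using this
    · have := GBT ht ((Polynomial.X:Polynomial ℚ) ^ (t*β)) α
      rw [← this]
      refine Finset.prod_congr rfl fun i _ => ?_
      rw [mul_one, ← pow_add, ← Nat.mul_add, Nat.add_comm i β]
  rw [hsplit] at hP1
  -- take coefficient at β
  have hco := congrArg (fun p => Polynomial.coeff p β) hP1.symm
  rw [Polynomial.coeff_mul] at hco
  -- LHS of hco : coefficient of the full GBT sum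
  have hL : Polynomial.coeff (∑ h ∈ range (β+α+1),
      C (gb t (β+α) h * (Polynomial.X:Polynomial ℚ) ^ (t * h.choose 2) * 1 ^ h) *
        Polynomial.X ^ h) β = gb t (β+α) β * (Polynomial.X:Polynomial ℚ) ^ (t * β.choose 2) := by
    have := coeff_gbsum (fun h => gb t (β+α) h * (Polynomial.X:Polynomial ℚ) ^ (t * h.choose 2) * 1 ^ h)
      (β+α+1) β
    rw [this, if_pos (by simp), one_pow, mul_one]
  rw [hL] at hco
  -- RHS of hco : antidiagonal sum
  rw [Finset.Nat.sum_antidiagonal_eq_sum_range_succ_mk] at hco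
  have hterm : ∀ j ∈ range (β+1),
      Polynomial.coeff (∑ j ∈ range (β+1), C (gb t β j * (Polynomial.X:Polynomial ℚ) ^ (t * j.choose 2)) *
          Polynomial.X ^ j) j *
      Polynomial.coeff (∑ h ∈ range (α+1), C (gb t α h * (Polynomial.X:Polynomial ℚ) ^ (t * h.choose 2) *
          ((Polynomial.X:Polynomial ℚ) ^ (t*β)) ^ h) * Polynomial.X ^ h) (β - j) =
      (gb t β j * (Polynomial.X:Polynomial ℚ) ^ (t * j.choose 2)) *
        (gb t α (β-j) * (Polynomial.X:Polynomial ℚ) ^ (t * (β-j).choose 2) *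
          ((Polynomial.X:Polynomial ℚ) ^ (t*β)) ^ (β-j)) := by
    intro j hj
    rw [coeff_gbsum, coeff_gbsum, if_pos hj]
    by_cases hba : β - j < α + 1
    · rw [if_pos (Finset.mem_range.mpr hba)]
    · rw [if_neg (fun hmem => hba (Finset.mem_range.mp hmem)),
        gb_zero_of_lt t (by omega : α < β - j)]
      ring
  rw [Finset.sum_congr rfl hterm] at hco
  -- reflect the sum
  rw [show ∑ j ∈ range (β+1),
      (gb t β j * (Polynomial.X:Polynomial ℚ) ^ (t * j.choose 2)) *
        (gb t α (β-j) * (Polynomial.X:Polynomial ℚ) ^ (t * (β-j).choose 2) *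
          ((Polynomial.X:Polynomial ℚ) ^ (t*β)) ^ (β-j)) =
      ∑ h ∈ range (β+1),
      (gb t β (β-h) * (Polynomial.X:Polynomial ℚ) ^ (t * (β-h).choose 2)) *
        (gb t α (β-(β-h)) * (Polynomial.X:Polynomial ℚ) ^ (t * (β-(β-h)).choose 2) *
          ((Polynomial.X:Polynomial ℚ) ^ (t*β)) ^ (β-(β-h))) from by
    rw [← Finset.sum_range_reflect]
    exact Finset.sum_congr rfl fun h hh => by
      rw [(by omega : β + 1 - 1 - h = β - h)]] at hco
  have hterm2 : ∀ h ∈ range (β+1),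
      (gb t β (β-h) * (Polynomial.X:Polynomial ℚ) ^ (t * (β-h).choose 2)) *
        (gb t α (β-(β-h)) * (Polynomial.X:Polynomial ℚ) ^ (t * (β-(β-h)).choose 2) *
          ((Polynomial.X:Polynomial ℚ) ^ (t*β)) ^ (β-(β-h))) =
      ((Polynomial.X : Polynomial ℚ) ^ (t*h^2) * gb t β h * gb t α h) *
        (Polynomial.X:Polynomial ℚ) ^ (t * β.choose 2) := by
    intro h hh
    have hhb : h ≤ β := by simp at hh; omega
    have e1 : β - (β - h) = h := by omega
    rw [e1, gb_symm ht hhb]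
    have hc : β.choose 2 = (β-h).choose 2 + h.choose 2 + (β-h)*h := by
      conv_lhs => rw [← Nat.sub_add_cancel hhb]
      exact choose2_add (β-h) h
    have hbh : β * h = (β - h)*h + h*h := by
      rw [← add_mul, Nat.sub_add_cancel hhb]
    have hexp : (Polynomial.X:Polynomial ℚ) ^ (t * (β-h).choose 2) *
        ((Polynomial.X:Polynomial ℚ) ^ (t * h.choose 2) *
          ((Polynomial.X:Polynomial ℚ) ^ (t*β)) ^ h) =
        (Polynomial.X:Polynomial ℚ) ^ (t*h^2) * (Polynomial.X:Polynomial ℚ) ^ (t * β.choose 2) := by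
      have key' : (β-h).choose 2 + (h.choose 2 + β*h) = h^2 + β.choose 2 := by
        rw [hc, pow_two, hbh]; ring
      rw [← pow_mul, ← pow_add, ← pow_add, ← pow_add]
      congr 1
      rw [show t * (β - h).choose 2 + (t * h.choose 2 + t * β * h)
            = t * ((β-h).choose 2 + (h.choose 2 + β * h)) from by ring,
          show t * h ^ 2 + t * β.choose 2 = t * (h^2 + β.choose 2) from by ring, key']
    linear_combination (gb t β h * gb t α h) * hexp
  rw [Finset.sum_congr rfl hterm2, ← Finset.sum_mul] at hco
  have := mul_right_cancel₀ (pow_ne_zero _ Polynomial.X_ne_zero) hco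
  rw [Nat.add_comm α β]
  exact this.symm

/-- Formal power series in three variables x/μ = X 0, z/ν = X 1, q = X 2. -/
abbrev S3 := MvPowerSeries (Fin 3) ℚ

/-- Product topology with discrete coefficients, so that infinite sums and
products of power series are meaningful. -/
instance : TopologicalSpace S3 :=
  @Pi.topologicalSpace ((Fin 3) →₀ ℕ) (fun _ => ℚ) (fun _ => ⊥)

/-- Interpret a polynomial in q as a power series in the variable X 2. -/
def pq (p : Polynomial ℚ) : S3 := Polynomial.aeval (MvPowerSeries.X 2 : S3) p

section Instances

instance S3.t2 : T2Space S3 := by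
  letI : TopologicalSpace ℚ := ⊥
  haveI : DiscreteTopology ℚ := ⟨rfl⟩
  exact inferInstanceAs (T2Space ((Fin 3 →₀ ℕ) → ℚ))

instance S3.t3 : T3Space S3 := by
  letI : TopologicalSpace ℚ := ⊥
  haveI : DiscreteTopology ℚ := ⟨rfl⟩
  exact inferInstanceAs (T3Space ((Fin 3 →₀ ℕ) → ℚ))

instance S3.contAdd : ContinuousAdd S3 := by
  letI : TopologicalSpace ℚ := ⊥
  haveI : DiscreteTopology ℚ := ⟨rfl⟩
  haveI : ContinuousAdd ℚ := ⟨continuous_of_discreteTopology⟩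
  exact inferInstanceAs (ContinuousAdd ((Fin 3 →₀ ℕ) → ℚ))

instance S3.contMul : ContinuousMul S3 := by
  letI : TopologicalSpace ℚ := ⊥
  haveI : DiscreteTopology ℚ := ⟨rfl⟩
  constructor
  refine continuous_pi_iff.mpr ?_
  intro d
  have : (fun p : S3 × S3 => (p.1 * p.2) d) = fun p : S3 × S3 =>
      ∑ uv ∈ Finset.HasAntidiagonal.antidiagonal d, p.1 uv.1 * p.2 uv.2 := by
    funext p
    exact MvPowerSeries.coeff_mul d p.1 p.2
  rw [this]
  apply continuous_finset_sum
  intro uv _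
  have h1 : Continuous fun p : S3 × S3 => p.1 uv.1 :=
    (continuous_apply uv.1).comp continuous_fst
  have h2 : Continuous fun p : S3 × S3 => p.2 uv.2 :=
    (continuous_apply uv.2).comp continuous_snd
  haveI : ContinuousMul ℚ := ⟨continuous_of_discreteTopology⟩
  exact h1.mul h2

instance S3.topSemiring : IsTopologicalSemiring S3 := ⟨⟩

end Instances

section Tools

lemma summable_S3 {ι : Type*} (f : ι → S3)
    (h : ∀ d : Fin 3 →₀ ℕ, {i | MvPowerSeries.coeff d (f i) ≠ 0}.Finite) : Summable f := by
  refine ⟨fun d => ∑ i ∈ (h d).toFinset, MvPowerSeries.coeff d (f i), ?_⟩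
  refine (@Pi.hasSum ((Fin 3) →₀ ℕ) ι (fun _ => ℚ) (fun _ => inferInstance) (fun _ => ⊥) _ f _).mpr ?_
  intro d
  refine @hasSum_sum_of_ne_finset_zero ℚ ι _ ⊥ _ _ _ ?_ _
  intro i hi
  by_contra h'
  exact hi ((h d).mem_toFinset.mpr h')

lemma coeff_X2_pow_mul_eq_zero {e : ℕ} {r : S3} {d : Fin 3 →₀ ℕ} (h : d 2 < e) :
    MvPowerSeries.coeff d ((MvPowerSeries.X 2 : S3) ^ e * r) = 0 := by
  rw [MvPowerSeries.X_pow_eq, MvPowerSeries.coeff_mul]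
  apply Finset.sum_eq_zero
  intro p hp
  rw [MvPowerSeries.coeff_monomial]
  rcases eq_or_ne p.1 (Finsupp.single 2 e) with he | he
  · exfalso
    have := Finset.HasAntidiagonal.mem_antidiagonal.mp hp
    have : p.1 2 + p.2 2 = d 2 := by rw [← Finsupp.add_apply, this]
    rw [he, Finsupp.single_eq_same] at this
    omega
  · rw [if_neg he, zero_mul]

end Tools

section MultisetLemmas

lemma card_le_sum_of_pos {u : Multiset ℕ} (h : ∀ x ∈ u, 0 < x) : u.card ≤ u.sum := by
  induction u using Multiset.induction with
  | empty => simp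
  | cons a s ih =>
    simp only [Multiset.card_cons, Multiset.sum_cons]
    have h1 := h a (by simp)
    have h2 := ih (fun x hx => h x (by simp [hx]))
    omega

lemma le_sum_of_mem {u : Multiset ℕ} {x : ℕ} (hx : x ∈ u) : x ≤ u.sum :=
  Multiset.single_le_sum (fun _ _ => Nat.zero_le _) x hx

lemma finite_multisets (M N : ℕ) : {u : Multiset ℕ | u.card ≤ M ∧ u.sum ≤ N}.Finite := by
  apply Set.Finite.subset (Multiset.powerset (M • ((Finset.range (N+1)).val))).finite_toSet
  rintro u ⟨hcard, hsum⟩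
  simp only [Multiset.mem_toFinset, Finset.mem_coe, Set.mem_setOf_eq, Multiset.mem_powerset]
  show u ≤ M • ((Finset.range (N+1)).val)
  rw [Multiset.le_iff_count]
  intro x
  rcases Nat.lt_or_ge N x with hx | hx
  · have : x ∉ u := fun hmem => by have := le_sum_of_mem hmem; omega
    simp [Multiset.count_eq_zero_of_notMem this]
  · have h1 : Multiset.count x u ≤ u.card := Multiset.count_le_card x u
    have h2 : Multiset.count x ((Finset.range (N+1)).val) = 1 := by
      rw [Multiset.count_eq_one_of_mem (Finset.range (N+1)).nodup]
      simpa using by omega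
    rw [Multiset.count_nsmul, h2]
    omega

lemma sum_map_add_right (u : Multiset ℕ) (m : ℕ) :
    (u.map (fun x => x + m)).sum = u.sum + u.card * m := by
  induction u using Multiset.induction with
  | empty => simp
  | cons a s ih => simp [ih]; ring

end MultisetLemmas

section Geometric

open MvPowerSeries

def Sgeo (c : ℕ) : S3 := fun d => if d 0 = 0 ∧ d 1 = 0 ∧ c ∣ d 2 then 1 else 0

lemma Sgeo_coeff (c : ℕ) (d : Fin 3 →₀ ℕ) :
    MvPowerSeries.coeff d (Sgeo c) = if d 0 = 0 ∧ d 1 = 0 ∧ c ∣ d 2 then 1 else 0 := rfl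

lemma eq_single2_iff {d : Fin 3 →₀ ℕ} {e : ℕ} :
    d = Finsupp.single 2 e ↔ d 0 = 0 ∧ d 1 = 0 ∧ d 2 = e := by
  constructor
  · rintro rfl
    refine ⟨by simp, by simp, by simp⟩
  · rintro ⟨h0, h1, h2⟩
    ext j
    fin_cases j
    · simpa using h0
    · simpa using h1
    · simpa using h2

lemma hasSum_geo {c : ℕ} (hc : 0 < c) :
    HasSum (fun n : ℕ => (MvPowerSeries.X 2 : S3) ^ (c*n)) (Sgeo c) := by
  refine (@Pi.hasSum ((Fin 3) →₀ ℕ) ℕ (fun _ => ℚ) (fun _ => inferInstance) (fun _ => ⊥)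
    _ _ _).mpr ?_
  intro d
  have hcoeff : ∀ n : ℕ, (((MvPowerSeries.X 2 : S3) ^ (c*n)) d : ℚ) =
      if d 0 = 0 ∧ d 1 = 0 ∧ d 2 = c * n then 1 else 0 := by
    intro n
    rw [show (((MvPowerSeries.X 2 : S3) ^ (c*n)) d : ℚ) =
      MvPowerSeries.coeff d ((MvPowerSeries.X 2 : S3) ^ (c*n)) from rfl,
      MvPowerSeries.X_pow_eq, MvPowerSeries.coeff_monomial]
    simp only [eq_single2_iff]
  by_cases hd : d 0 = 0 ∧ d 1 = 0 ∧ c ∣ d 2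
  · obtain ⟨m, hm⟩ := hd.2.2
    have hval : Sgeo c d = 1 := by simp only [Sgeo]; rw [if_pos hd]
    have hfun : (fun n : ℕ => (((MvPowerSeries.X 2 : S3) ^ (c*n)) d : ℚ)) =
        fun n => if n = m then 1 else 0 := by
      funext n
      rw [hcoeff n]
      congr 1
      apply propext
      constructor
      · rintro ⟨-, -, h2⟩
        have : c * m = c * n := by omega
        exact (Nat.eq_of_mul_eq_mul_left hc this).symm
      · rintro rfl
        exact ⟨hd.1, hd.2.1, by omega⟩
    rw [show (Sgeo c d : ℚ) = 1 from hval, hfun]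
    exact @hasSum_ite_eq ℚ ℕ _ ⊥ m _ 1 _ _
  · have hval : Sgeo c d = 0 := by simp only [Sgeo]; rw [if_neg hd]
    have hfun : (fun n : ℕ => (((MvPowerSeries.X 2 : S3) ^ (c*n)) d : ℚ)) = fun _ => 0 := by
      funext n
      rw [hcoeff n, if_neg]
      rintro ⟨h0, h1, h2⟩
      exact hd ⟨h0, h1, h2 ▸ Dvd.intro n rfl⟩
    rw [show (Sgeo c d : ℚ) = 0 from hval, hfun]
    exact @hasSum_zero ℚ ℕ _ ⊥ _

lemma coeff_mul_X2_pow (f : S3) (c : ℕ) (d : Fin 3 →₀ ℕ) :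
    MvPowerSeries.coeff d (f * (MvPowerSeries.X 2 : S3) ^ c) =
      if Finsupp.single 2 c ≤ d then MvPowerSeries.coeff (d - Finsupp.single 2 c) f else 0 := by
  rw [MvPowerSeries.X_pow_eq, MvPowerSeries.coeff_mul]
  by_cases hle : Finsupp.single 2 c ≤ d
  · rw [if_pos hle]
    rw [Finset.sum_eq_single (d - Finsupp.single 2 c, Finsupp.single 2 c)]
    · rw [MvPowerSeries.coeff_monomial, if_pos rfl, mul_one]
    · rintro ⟨u, v⟩ hmem hne
      rw [MvPowerSeries.coeff_monomial]
      rcases eq_or_ne v (Finsupp.single 2 c) with rfl | hv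
      · exfalso
        apply hne
        have hu : u + Finsupp.single 2 c = d := Finset.HasAntidiagonal.mem_antidiagonal.mp hmem
        have : u = d - Finsupp.single 2 c := by
          ext j
          have := congrArg (fun g => g j) hu
          simp only [Finsupp.add_apply] at this
          simp only [Finsupp.tsub_apply]
          omega
        rw [this]
      · rw [if_neg hv, mul_zero]
    · intro hnot
      exfalso
      apply hnot
      rw [Finset.HasAntidiagonal.mem_antidiagonal]
      exact tsub_add_cancel_of_le hle
  · rw [if_neg hle]
    apply Finset.sum_eq_zero
    rintro ⟨u, v⟩ hmem
    rw [MvPowerSeries.coeff_monomial]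
    rcases eq_or_ne v (Finsupp.single 2 c) with rfl | hv
    · exfalso
      have hsum : u + Finsupp.single 2 c = d := Finset.HasAntidiagonal.mem_antidiagonal.mp hmem
      exact hle (le_of_le_of_eq le_add_self hsum)
    · rw [if_neg hv, mul_zero]

lemma Sgeo_mul {c : ℕ} (hc : 0 < c) :
    Sgeo c * (1 - (MvPowerSeries.X 2 : S3) ^ c) = 1 := by
  apply MvPowerSeries.ext
  intro d
  rw [mul_sub, mul_one, map_sub, coeff_mul_X2_pow, MvPowerSeries.coeff_one, Sgeo_coeff,
    Sgeo_coeff]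
  have e0 : ((d - Finsupp.single 2 c : Fin 3 →₀ ℕ)) 0 = d 0 := by
    rw [Finsupp.tsub_apply]; simp
  have e1 : ((d - Finsupp.single 2 c : Fin 3 →₀ ℕ)) 1 = d 1 := by
    rw [Finsupp.tsub_apply]; simp
  have e2 : ((d - Finsupp.single 2 c : Fin 3 →₀ ℕ)) 2 = d 2 - c := by
    rw [Finsupp.tsub_apply]; simp
  have hle_iff : Finsupp.single 2 c ≤ d ↔ c ≤ d 2 := by
    rw [Finsupp.le_def]
    constructor
    · intro h
      have := h 2
      rwa [Finsupp.single_eq_same] at this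
    · intro h j
      rcases eq_or_ne j 2 with rfl | hj
      · rwa [Finsupp.single_eq_same]
      · rw [Finsupp.single_eq_of_ne hj]
        exact Nat.zero_le _
  have hd0 : (d = 0) ↔ (d 0 = 0 ∧ d 1 = 0 ∧ d 2 = 0) := by
    constructor
    · rintro rfl; exact ⟨rfl, rfl, rfl⟩
    · rintro ⟨h0, h1, h2⟩; ext j; fin_cases j
      · simpa using h0
      · simpa using h1
      · simpa using h2
  rw [e0, e1, e2]
  simp only [hle_iff, hd0]
  by_cases h0 : d 0 = 0
  · by_cases h1 : d 1 = 0
    · by_cases hdvd : c ∣ d 2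
      · rcases Nat.eq_zero_or_pos (d 2) with h2 | h2
        · rw [if_pos ⟨h0, h1, hdvd⟩, if_neg (by omega), if_pos ⟨h0, h1, h2⟩]
          norm_num
        · have hcle : c ≤ d 2 := Nat.le_of_dvd h2 hdvd
          rw [if_pos ⟨h0, h1, hdvd⟩, if_pos hcle,
            if_pos ⟨h0, h1, Nat.dvd_sub hdvd dvd_rfl⟩,
            if_neg (by rintro ⟨-, -, hz⟩; omega)]
          norm_num
      · have hA : ¬ (d 0 = 0 ∧ d 1 = 0 ∧ c ∣ d 2) := fun hh => hdvd hh.2.2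
        have hD : ¬ (d 0 = 0 ∧ d 1 = 0 ∧ d 2 = 0) := by
          rintro ⟨-, -, hz⟩; exact hdvd (hz ▸ dvd_zero c)
        rw [if_neg hA, if_neg hD]
        by_cases hle : c ≤ d 2
        · rw [if_pos hle, if_neg, sub_zero]
          rintro ⟨-, -, hdd⟩
          apply hdvd
          have := Nat.dvd_add hdd (dvd_refl c)
          rwa [Nat.sub_add_cancel hle] at this
        · rw [if_neg hle, sub_zero]
    · have hA : ¬ (d 0 = 0 ∧ d 1 = 0 ∧ c ∣ d 2) := fun hh => h1 hh.2.1
      have hD : ¬ (d 0 = 0 ∧ d 1 = 0 ∧ d 2 = 0) := fun hh => h1 hh.2.1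
      rw [if_neg hA, if_neg hD]
      by_cases hle : c ≤ d 2
      · rw [if_pos hle, if_neg (fun hh => h1 hh.2.1), sub_zero]
      · rw [if_neg hle, sub_zero]
  · have hA : ¬ (d 0 = 0 ∧ d 1 = 0 ∧ c ∣ d 2) := fun hh => h0 hh.1
    have hD : ¬ (d 0 = 0 ∧ d 1 = 0 ∧ d 2 = 0) := fun hh => h0 hh.1
    rw [if_neg hA, if_neg hD]
    by_cases hle : c ≤ d 2
    · rw [if_pos hle, if_neg (fun hh => h0 hh.1), sub_zero]
    · rw [if_neg hle, sub_zero]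

end Geometric

section Fiber

open MvPowerSeries

lemma pq_qpoch_succ (k α : ℕ) :
    pq (qpoch k (α+1)) = pq (qpoch k α) * (1 - (MvPowerSeries.X 2 : S3) ^ (k*(α+1))) := by
  rw [qpoch_succ]
  simp [pq]

lemma coeff_X2pow (e : ℕ) (d : Fin 3 →₀ ℕ) :
    MvPowerSeries.coeff d ((MvPowerSeries.X 2 : S3) ^ e) =
      if d = Finsupp.single 2 e then 1 else 0 := by
  rw [MvPowerSeries.X_pow_eq, MvPowerSeries.coeff_monomial]

lemma finite_fiber_sub (α N : ℕ) :
    {u : {u : Multiset ℕ // Multiset.card u = α} | u.1.sum ≤ N}.Finite := by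
  apply Set.Finite.subset
    (Set.Finite.preimage (Subtype.val_injective.injOn) (finite_multisets α N))
  intro u hu
  exact ⟨le_of_eq u.2, hu⟩

lemma summable_fiber {k : ℕ} (hk : 0 < k) (α : ℕ) :
    Summable (fun u : {u : Multiset ℕ // Multiset.card u = α} =>
      (MvPowerSeries.X 2 : S3) ^ (k * u.1.sum)) := by
  apply summable_S3
  intro d
  apply Set.Finite.subset (finite_fiber_sub α (d 2))
  intro u hu
  simp only [Set.mem_setOf_eq] at hu ⊢
  rw [coeff_X2pow] at hu
  rcases eq_or_ne d (Finsupp.single 2 (k * u.1.sum)) with he | he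
  · have hd2 : d 2 = k * u.1.sum := by rw [he, Finsupp.single_eq_same]
    exact le_trans (Nat.le_mul_of_pos_left _ hk) hd2.ge
  · rw [if_neg he] at hu
    exact absurd rfl hu

def fiberEquiv (α : ℕ) : ℕ × {u : Multiset ℕ // Multiset.card u = α} ≃
    {u : Multiset ℕ // Multiset.card u = α + 1} where
  toFun p := ⟨p.1 ::ₘ p.2.1.map (fun x => x + p.1), by simp [p.2.2]⟩
  invFun w :=
    have hne : w.1.toFinset.Nonempty := by
      rw [Multiset.toFinset_nonempty]
      intro h
      have := w.2
      rw [h] at this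
      simp at this
    (w.1.toFinset.min' hne,
      ⟨(w.1.erase (w.1.toFinset.min' hne)).map (fun x => x - w.1.toFinset.min' hne), by
        have hmem : w.1.toFinset.min' hne ∈ w.1 :=
          Multiset.mem_toFinset.mp (Finset.min'_mem _ _)
        rw [Multiset.card_map, Multiset.card_erase_of_mem hmem, w.2]
        rfl⟩)
  left_inv := by
    rintro ⟨m, u, hu⟩
    have hmin : ((m ::ₘ Multiset.map (fun x => x + m) u).toFinset.min'
        (by rw [Multiset.toFinset_nonempty]; simp)) = m := by
      apply le_antisymm
      · exact Finset.min'_le _ m (Multiset.mem_toFinset.mpr (Multiset.mem_cons_self _ _))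
      · apply Finset.le_min'
        intro y hy
        rcases Multiset.mem_cons.mp (Multiset.mem_toFinset.mp hy) with rfl | hy'
        · exact le_rfl
        · obtain ⟨x, -, rfl⟩ := Multiset.mem_map.mp hy'
          exact Nat.le_add_left m x
    refine Prod.ext_iff.mpr ⟨?_, Subtype.ext ?_⟩
    · exact hmin
    · dsimp only
      rw [hmin, Multiset.erase_cons_head, Multiset.map_map]
      rw [show ((fun x => x - m) ∘ (fun x => x + m)) = fun x : ℕ => x from
        funext fun x => by simp [Function.comp]]
      exact Multiset.map_id' u
  right_inv := by
    rintro ⟨w, hw⟩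
    have hne : w.toFinset.Nonempty := by
      rw [Multiset.toFinset_nonempty]
      intro h
      rw [h] at hw
      simp at hw
    have hmem : w.toFinset.min' hne ∈ w := Multiset.mem_toFinset.mp (Finset.min'_mem _ _)
    have hle : ∀ x ∈ w, w.toFinset.min' hne ≤ x := fun x hx =>
      Finset.min'_le _ x (Multiset.mem_toFinset.mpr hx)
    apply Subtype.ext
    show (w.toFinset.min' hne ::ₘ
      ((w.erase (w.toFinset.min' hne)).map (fun x => x - w.toFinset.min' hne)).map
        (fun x => x + w.toFinset.min' hne)) = w
    rw [Multiset.map_map]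
    have : ((w.erase (w.toFinset.min' hne)).map
        ((fun x => x + w.toFinset.min' hne) ∘ (fun x => x - w.toFinset.min' hne))) =
        w.erase (w.toFinset.min' hne) := by
      rw [show (w.erase (w.toFinset.min' hne)).map
          ((fun x => x + w.toFinset.min' hne) ∘ (fun x => x - w.toFinset.min' hne)) =
          (w.erase (w.toFinset.min' hne)).map (fun x => x) from
        Multiset.map_congr rfl (fun x hx =>
          Nat.sub_add_cancel (hle x (Multiset.mem_of_mem_erase hx)))]
      exact Multiset.map_id' _
    rw [this]
    exact Multiset.cons_erase hmem

lemma fiberEquiv_sum (α : ℕ) (p : ℕ × {u : Multiset ℕ // Multiset.card u = α}) :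
    ((fiberEquiv α p).1).sum = (α + 1) * p.1 + p.2.1.sum := by
  show (p.1 ::ₘ p.2.1.map (fun x => x + p.1)).sum = _
  rw [Multiset.sum_cons, sum_map_add_right, p.2.2]
  ring

lemma fiber_tsum_mul {k : ℕ} (hk : 0 < k) (α : ℕ) :
    (∑' u : {u : Multiset ℕ // Multiset.card u = α},
      (MvPowerSeries.X 2 : S3) ^ (k * u.1.sum)) * pq (qpoch k α) = 1 := by
  induction α with
  | zero =>
    rw [tsum_eq_single (⟨0, rfl⟩ : {u : Multiset ℕ // Multiset.card u = 0})
      (fun u hu => absurd (Subtype.ext (Multiset.card_eq_zero.mp u.2)) hu)]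
    simp [pq]
  | succ α ih =>
    have hrw := Equiv.tsum_eq (fiberEquiv α)
      (fun u : {u : Multiset ℕ // Multiset.card u = α + 1} =>
        (MvPowerSeries.X 2 : S3) ^ (k * u.1.sum))
    rw [← hrw]
    have hterm : ∀ p : ℕ × {u : Multiset ℕ // Multiset.card u = α},
        (MvPowerSeries.X 2 : S3) ^ (k * ((fiberEquiv α p).1).sum) =
        (MvPowerSeries.X 2 : S3) ^ ((k * (α+1)) * p.1) *
          (MvPowerSeries.X 2 : S3) ^ (k * p.2.1.sum) := by
      intro p
      rw [fiberEquiv_sum, ← pow_add]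
      congr 1
      ring
    rw [tsum_congr hterm]
    have hsummand : Summable (fun p : ℕ × {u : Multiset ℕ // Multiset.card u = α} =>
        (MvPowerSeries.X 2 : S3) ^ ((k * (α+1)) * p.1) *
          (MvPowerSeries.X 2 : S3) ^ (k * p.2.1.sum)) := by
      apply summable_S3
      intro d
      have hsub : {p : ℕ × {u : Multiset ℕ // Multiset.card u = α} |
          MvPowerSeries.coeff d ((MvPowerSeries.X 2 : S3) ^ ((k * (α+1)) * p.1) *
            (MvPowerSeries.X 2 : S3) ^ (k * p.2.1.sum)) ≠ 0} ⊆
          Set.Iic (d 2) ×ˢ {u | u.1.sum ≤ d 2} := by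
        rintro ⟨m, u⟩ hp
        simp only [Set.mem_setOf_eq] at hp
        rw [← pow_add, coeff_X2pow] at hp
        rcases eq_or_ne d (Finsupp.single 2 (k * (α+1) * m + k * u.1.sum)) with he | he
        · have hd2 : d 2 = k * (α+1) * m + k * u.1.sum := by
            rw [he, Finsupp.single_eq_same]
          constructor
          · simp only [Set.mem_Iic]
            exact le_trans (Nat.le_mul_of_pos_left m (by positivity))
              (le_trans (Nat.le_add_right _ _) hd2.ge)
          · simp only [Set.mem_setOf_eq]
            exact le_trans (Nat.le_mul_of_pos_left _ hk)
              (le_trans (Nat.le_add_left _ _) hd2.ge)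
        · rw [if_neg he] at hp
          exact absurd rfl hp
      exact Set.Finite.subset ((Set.finite_Iic (d 2)).prod (finite_fiber_sub α (d 2))) hsub
    have hslice : ∀ m : ℕ, Summable (fun u : {u : Multiset ℕ // Multiset.card u = α} =>
        (MvPowerSeries.X 2 : S3) ^ ((k * (α+1)) * m) *
          (MvPowerSeries.X 2 : S3) ^ (k * u.1.sum)) :=
      fun m => Summable.mul_left _ (summable_fiber hk α)
    have hps := Summable.tsum_prod' hsummand hslice
    rw [hps]
    have hinner : ∀ m : ℕ,
        (∑' u : {u : Multiset ℕ // Multiset.card u = α},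
          (MvPowerSeries.X 2 : S3) ^ ((k * (α+1)) * m) *
            (MvPowerSeries.X 2 : S3) ^ (k * u.1.sum)) =
        (MvPowerSeries.X 2 : S3) ^ ((k * (α+1)) * m) *
          ∑' u : {u : Multiset ℕ // Multiset.card u = α},
            (MvPowerSeries.X 2 : S3) ^ (k * u.1.sum) := fun m =>
      Summable.tsum_mul_left _ (summable_fiber hk α)
    rw [tsum_congr hinner]
    have hc' : 0 < k * (α + 1) := by positivity
    rw [Summable.tsum_mul_right _ (hasSum_geo hc').summable, (hasSum_geo hc').tsum_eq,
      pq_qpoch_succ]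
    rw [show (Sgeo (k*(α+1)) *
        ∑' u : {u : Multiset ℕ // Multiset.card u = α},
          (MvPowerSeries.X 2 : S3) ^ (k * u.1.sum)) *
        (pq (qpoch k α) * (1 - (MvPowerSeries.X 2 : S3) ^ (k*(α+1)))) =
        ((∑' u : {u : Multiset ℕ // Multiset.card u = α},
          (MvPowerSeries.X 2 : S3) ^ (k * u.1.sum)) * pq (qpoch k α)) *
        (Sgeo (k*(α+1)) * (1 - (MvPowerSeries.X 2 : S3) ^ (k*(α+1)))) from by ring,
      ih, Sgeo_mul hc', mul_one]

end Fiber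

section Inverse

open MvPowerSeries

lemma pq_mul (p q : Polynomial ℚ) : pq (p * q) = pq p * pq q := by simp [pq]

lemma isUnit_pq_qpoch {k : ℕ} (hk : 0 < k) (α : ℕ) : IsUnit (pq (qpoch k α)) :=
  IsUnit.of_mul_eq_one _ (by rw [mul_comm]; exact fiber_tsum_mul hk α)

lemma inverse_pq_qpoch {k : ℕ} (hk : 0 < k) (α : ℕ) :
    Ring.inverse (pq (qpoch k α)) =
      ∑' u : {u : Multiset ℕ // Multiset.card u = α},
        (MvPowerSeries.X 2 : S3) ^ (k * u.1.sum) := by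
  have h := fiber_tsum_mul hk α
  let u : S3ˣ := ⟨pq (qpoch k α),
    ∑' u : {u : Multiset ℕ // Multiset.card u = α}, (MvPowerSeries.X 2 : S3) ^ (k * u.1.sum),
    by rw [mul_comm]; exact h, h⟩
  exact Ring.inverse_unit u

lemma inverse_qpoch_split {k : ℕ} (hk : 0 < k) (α β : ℕ) :
    Ring.inverse (pq (qpoch k (α+β))) * pq (gb k (α+β) β) =
      Ring.inverse (pq (qpoch k α)) * Ring.inverse (pq (qpoch k β)) := by
  have hfac : pq (gb k (α+β) β) * (pq (qpoch k β) * pq (qpoch k α)) = pq (qpoch k (α+β)) := by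
    rw [← pq_mul, ← pq_mul, show qpoch k β * qpoch k α = qpoch k β * qpoch k ((α+β)-β) from
      by rw [Nat.add_sub_cancel], gb_mul_qpoch hk (α+β) β (Nat.le_add_left β α)]
  apply (isUnit_pq_qpoch hk (α+β)).mul_left_cancel
  rw [← mul_assoc, Ring.mul_inverse_cancel _ (isUnit_pq_qpoch hk (α+β)), one_mul]
  conv_rhs => rw [← hfac]
  rw [show pq (gb k (α+β) β) * (pq (qpoch k β) * pq (qpoch k α)) *
      (Ring.inverse (pq (qpoch k α)) * Ring.inverse (pq (qpoch k β))) =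
      pq (gb k (α+β) β) * ((pq (qpoch k α) * Ring.inverse (pq (qpoch k α))) *
        (pq (qpoch k β) * Ring.inverse (pq (qpoch k β)))) from by ring,
    Ring.mul_inverse_cancel _ (isUnit_pq_qpoch hk α),
    Ring.mul_inverse_cancel _ (isUnit_pq_qpoch hk β), one_mul, mul_one]

end Inverse

section SideSum

open MvPowerSeries

lemma side_sum {k c : ℕ} (hk : 0 < k) (hc : 0 < c) (j : Fin 3) :
    (∑' u : Multiset ℕ, (MvPowerSeries.X j : S3) ^ (Multiset.card u) *
      (MvPowerSeries.X 2 : S3) ^ (c * Multiset.card u + k * u.sum)) =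
    ∑' α : ℕ, (MvPowerSeries.X j : S3) ^ α * (MvPowerSeries.X 2 : S3) ^ (c * α) *
      Ring.inverse (pq (qpoch k α)) := by
  rw [← Equiv.tsum_eq (Equiv.sigmaFiberEquiv (fun u : Multiset ℕ => Multiset.card u))]
  have hterm : ∀ σ : Σ α : ℕ, {u : Multiset ℕ // Multiset.card u = α},
      (MvPowerSeries.X j : S3) ^
          (Multiset.card ((Equiv.sigmaFiberEquiv (fun u : Multiset ℕ => Multiset.card u)) σ)) *
        (MvPowerSeries.X 2 : S3) ^
          (c * Multiset.card ((Equiv.sigmaFiberEquiv (fun u : Multiset ℕ => Multiset.card u)) σ) +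
            k * ((Equiv.sigmaFiberEquiv (fun u : Multiset ℕ => Multiset.card u)) σ).sum) =
      ((MvPowerSeries.X j : S3) ^ σ.1 * (MvPowerSeries.X 2 : S3) ^ (c * σ.1)) *
        (MvPowerSeries.X 2 : S3) ^ (k * σ.2.1.sum) := by
    rintro ⟨α, u, hu⟩
    show (MvPowerSeries.X j : S3) ^ (Multiset.card u) *
        (MvPowerSeries.X 2 : S3) ^ (c * Multiset.card u + k * u.sum) = _
    rw [hu, pow_add]
    ring
  rw [tsum_congr hterm]
  have hcoeffbound : ∀ (α : ℕ) (u : {u : Multiset ℕ // Multiset.card u = α})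
      (d : Fin 3 →₀ ℕ),
      MvPowerSeries.coeff d (((MvPowerSeries.X j : S3) ^ α *
        (MvPowerSeries.X 2 : S3) ^ (c * α)) * (MvPowerSeries.X 2 : S3) ^ (k * u.1.sum)) ≠ 0 →
      α ≤ d 2 ∧ u.1.sum ≤ d 2 := by
    intro α u d hne
    by_contra hcon
    apply hne
    rw [show ((MvPowerSeries.X j : S3) ^ α * (MvPowerSeries.X 2 : S3) ^ (c * α)) *
        (MvPowerSeries.X 2 : S3) ^ (k * u.1.sum) =
        (MvPowerSeries.X 2 : S3) ^ (c * α + k * u.1.sum) * (MvPowerSeries.X j : S3) ^ α from by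
      rw [pow_add]; ring]
    apply coeff_X2_pow_mul_eq_zero
    push_neg at hcon
    rcases Nat.lt_or_ge (d 2) α with h1 | h1
    · calc d 2 < α := h1
        _ ≤ c * α := Nat.le_mul_of_pos_left _ hc
        _ ≤ c * α + k * u.1.sum := Nat.le_add_right _ _
    · have h2 := hcon h1
      calc d 2 < u.1.sum := h2
        _ ≤ k * u.1.sum := Nat.le_mul_of_pos_left _ hk
        _ ≤ c * α + k * u.1.sum := Nat.le_add_left _ _
  have hsliceS : ∀ α : ℕ, Summable (fun u : {u : Multiset ℕ // Multiset.card u = α} =>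
      ((MvPowerSeries.X j : S3) ^ α * (MvPowerSeries.X 2 : S3) ^ (c * α)) *
        (MvPowerSeries.X 2 : S3) ^ (k * u.1.sum)) :=
    fun α => Summable.mul_left _ (summable_fiber hk α)
  have hsigmaS : Summable (fun σ : Σ α : ℕ, {u : Multiset ℕ // Multiset.card u = α} =>
      ((MvPowerSeries.X j : S3) ^ σ.1 * (MvPowerSeries.X 2 : S3) ^ (c * σ.1)) *
        (MvPowerSeries.X 2 : S3) ^ (k * σ.2.1.sum)) := by
    apply summable_S3
    intro d
    have hsub : {σ : Σ α : ℕ, {u : Multiset ℕ // Multiset.card u = α} |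
        MvPowerSeries.coeff d (((MvPowerSeries.X j : S3) ^ σ.1 *
          (MvPowerSeries.X 2 : S3) ^ (c * σ.1)) *
            (MvPowerSeries.X 2 : S3) ^ (k * σ.2.1.sum)) ≠ 0} ⊆
        {σ : Σ α : ℕ, {u : Multiset ℕ // Multiset.card u = α} |
          σ.2.1.card ≤ d 2 ∧ σ.2.1.sum ≤ d 2} := by
      rintro ⟨α, u⟩ hσ
      have := hcoeffbound α u d hσ
      exact ⟨u.2.le.trans this.1, this.2⟩
    apply Set.Finite.subset _ hsub
    apply Set.Finite.of_finite_image (f := fun σ : Σ α : ℕ,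
        {u : Multiset ℕ // Multiset.card u = α} => σ.2.1)
    · apply Set.Finite.subset (finite_multisets (d 2) (d 2))
      rintro v ⟨⟨α, u⟩, hmem, rfl⟩
      exact hmem
    · rintro ⟨α, u⟩ - ⟨α', u'⟩ - h
      dsimp at h
      have hαα : α = α' := by rw [← u.2, ← u'.2]; exact congrArg Multiset.card h
      subst hαα
      exact Sigma.ext rfl (heq_of_eq (Subtype.ext h))
  rw [Summable.tsum_sigma' (fun α => hsliceS α) hsigmaS]
  refine tsum_congr fun α => ?_
  dsimp only
  rw [Summable.tsum_mul_left _ (summable_fiber hk α), ← inverse_pq_qpoch hk α, mul_assoc]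

end SideSum

section Partitions

variable {a b k : ℕ}

lemma mod_recover {c x : ℕ} (hc1 : 1 ≤ c) (hck : c ≤ k) (hx : 0 < x)
    (hm : x % k = c % k) : c ≤ x ∧ x = c + k * ((x - c) / k) := by
  have hk : 0 < k := by omega
  have hcx : c ≤ x := by
    rcases Nat.eq_or_lt_of_le hck with rfl | hlt
    · have h0 : x % c = 0 := by rwa [Nat.mod_self] at hm
      have : c ∣ x := Nat.dvd_of_mod_eq_zero h0
      exact Nat.le_of_dvd hx this
    · have : c % k = c := Nat.mod_eq_of_lt hlt
      rw [this] at hm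
      have := Nat.mod_le x k
      omega
  have hdvd : k ∣ (x - c) := by
    exact Nat.dvd_of_mod_eq_zero (Nat.sub_mod_eq_zero_of_mod_eq hm)
  refine ⟨hcx, ?_⟩
  rw [Nat.mul_div_cancel' hdvd]
  omega

lemma mod_ab_ne (ha : 1 ≤ a) (hab : a < b) (hbk : b ≤ k) : a % k ≠ b % k := by
  have hak : a < k := by omega
  rw [Nat.mod_eq_of_lt hak]
  rcases Nat.eq_or_lt_of_le hbk with rfl | hlt
  · rw [Nat.mod_self]; omega
  · rw [Nat.mod_eq_of_lt hlt]; omega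

lemma sum_map_affine (u : Multiset ℕ) (c t : ℕ) :
    (u.map (fun j => c + t * j)).sum = c * Multiset.card u + t * u.sum := by
  induction u using Multiset.induction with
  | empty => simp
  | cons x s ih => simp [ih]; ring

def partEquiv (ha : 1 ≤ a) (hab : a < b) (hbk : b ≤ k) :
    Multiset ℕ × Multiset ℕ ≃
      {π : Multiset ℕ // ∀ x ∈ π, 0 < x ∧ (x % k = a % k ∨ x % k = b % k)} where
  toFun p := ⟨p.1.map (fun j => a + k * j) + p.2.map (fun j => b + k * j), by
    intro x hx
    rcases Multiset.mem_add.mp hx with hx | hx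
    · obtain ⟨j, -, rfl⟩ := Multiset.mem_map.mp hx
      exact ⟨by omega, Or.inl (Nat.add_mul_mod_self_left a k j)⟩
    · obtain ⟨j, -, rfl⟩ := Multiset.mem_map.mp hx
      exact ⟨by omega, Or.inr (Nat.add_mul_mod_self_left b k j)⟩⟩
  invFun π := ((π.1.filter (fun x => x % k = a % k)).map (fun x => (x - a) / k),
    (π.1.filter (fun x => x % k = b % k)).map (fun x => (x - b) / k))
  left_inv := by
    rintro ⟨u, v⟩
    have hk : 0 < k := by omega
    have hfa : ((u.map (fun j => a + k * j) + v.map (fun j => b + k * j)).filter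
        (fun x => x % k = a % k)) = u.map (fun j => a + k * j) := by
      rw [Multiset.filter_add, Multiset.filter_eq_self.mpr, Multiset.filter_eq_nil.mpr, add_zero]
      · intro x hx
        obtain ⟨j, -, rfl⟩ := Multiset.mem_map.mp hx
        exact fun hh => (mod_ab_ne ha hab hbk) ((Nat.add_mul_mod_self_left b k j).symm.trans hh).symm
      · intro x hx
        obtain ⟨j, -, rfl⟩ := Multiset.mem_map.mp hx
        exact Nat.add_mul_mod_self_left a k j
    have hfb : ((u.map (fun j => a + k * j) + v.map (fun j => b + k * j)).filter
        (fun x => x % k = b % k)) = v.map (fun j => b + k * j) := by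
      rw [Multiset.filter_add, Multiset.filter_eq_nil.mpr, Multiset.filter_eq_self.mpr, zero_add]
      · intro x hx
        obtain ⟨j, -, rfl⟩ := Multiset.mem_map.mp hx
        exact Nat.add_mul_mod_self_left b k j
      · intro x hx
        obtain ⟨j, -, rfl⟩ := Multiset.mem_map.mp hx
        exact fun hh => (mod_ab_ne ha hab hbk) ((Nat.add_mul_mod_self_left a k j).symm.trans hh)
    show (_, _) = (u, v)
    rw [Prod.ext_iff]
    constructor
    · show ((u.map (fun j => a + k * j) + v.map (fun j => b + k * j)).filter
          (fun x => x % k = a % k)).map (fun x => (x - a) / k) = u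
      rw [hfa, Multiset.map_map]
      rw [show ((fun x => (x - a) / k) ∘ (fun j => a + k * j)) = fun j : ℕ => j from
        funext fun j => by simp [Function.comp, Nat.add_sub_cancel_left, Nat.mul_div_cancel_left j hk]]
      exact Multiset.map_id' u
    · show ((u.map (fun j => a + k * j) + v.map (fun j => b + k * j)).filter
          (fun x => x % k = b % k)).map (fun x => (x - b) / k) = v
      rw [hfb, Multiset.map_map]
      rw [show ((fun x => (x - b) / k) ∘ (fun j => b + k * j)) = fun j : ℕ => j from
        funext fun j => by simp [Function.comp, Nat.add_sub_cancel_left, Nat.mul_div_cancel_left j hk]]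
      exact Multiset.map_id' v
  right_inv := by
    rintro ⟨π, hπ⟩
    apply Subtype.ext
    show ((π.filter (fun x => x % k = a % k)).map (fun x => (x - a) / k)).map
        (fun j => a + k * j) +
      ((π.filter (fun x => x % k = b % k)).map (fun x => (x - b) / k)).map
        (fun j => b + k * j) = π
    rw [Multiset.map_map, Multiset.map_map]
    have h1 : (π.filter (fun x => x % k = a % k)).map
        ((fun j => a + k * j) ∘ (fun x => (x - a) / k)) = π.filter (fun x => x % k = a % k) := by
      rw [show (π.filter (fun x => x % k = a % k)).map
          ((fun j => a + k * j) ∘ (fun x => (x - a) / k)) =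
          (π.filter (fun x => x % k = a % k)).map (fun x => x) from
        Multiset.map_congr rfl fun x hx => by
          have hmem := Multiset.mem_filter.mp hx
          have hpos := (hπ x hmem.1).1
          have := mod_recover (by omega : 1 ≤ a) (by omega : a ≤ k) hpos hmem.2
          simp only [Function.comp]
          omega]
      exact Multiset.map_id' _
    have h2 : (π.filter (fun x => x % k = b % k)).map
        ((fun j => b + k * j) ∘ (fun x => (x - b) / k)) = π.filter (fun x => x % k = b % k) := by
      rw [show (π.filter (fun x => x % k = b % k)).map
          ((fun j => b + k * j) ∘ (fun x => (x - b) / k)) =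
          (π.filter (fun x => x % k = b % k)).map (fun x => x) from
        Multiset.map_congr rfl fun x hx => by
          have hmem := Multiset.mem_filter.mp hx
          have hpos := (hπ x hmem.1).1
          have := mod_recover (by omega : 1 ≤ b) hbk hpos hmem.2
          simp only [Function.comp]
          omega]
      exact Multiset.map_id' _
    rw [h1, h2]
    have hbimp : ∀ x ∈ π, ((x % k = b % k) ↔ ¬ (x % k = a % k)) := by
      intro x hx
      constructor
      · intro hb hha
        exact (mod_ab_ne ha hab hbk) (hha.symm.trans hb)
      · intro hna
        rcases (hπ x hx).2 with h | h
        · exact absurd h hna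
        · exact h
    rw [Multiset.filter_congr hbimp]
    exact Multiset.filter_add_not _ π

end Partitions

section Assembly

open MvPowerSeries

lemma pq_X_pow (n : ℕ) : pq (Polynomial.X ^ n) = (MvPowerSeries.X 2 : S3) ^ n := by simp [pq]

lemma filter_a_eq {a b k : ℕ} (ha : 1 ≤ a) (hab : a < b) (hbk : b ≤ k)
    (u v : Multiset ℕ) :
    ((u.map (fun j => a + k * j) + v.map (fun j => b + k * j)).filter
        (fun x => x % k = a % k)) = u.map (fun j => a + k * j) := by
  rw [Multiset.filter_add, Multiset.filter_eq_self.mpr, Multiset.filter_eq_nil.mpr, add_zero]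
  · intro x hx
    obtain ⟨j, -, rfl⟩ := Multiset.mem_map.mp hx
    exact fun hh => (mod_ab_ne ha hab hbk) ((Nat.add_mul_mod_self_left b k j).symm.trans hh).symm
  · intro x hx
    obtain ⟨j, -, rfl⟩ := Multiset.mem_map.mp hx
    exact Nat.add_mul_mod_self_left a k j

lemma filter_b_eq {a b k : ℕ} (ha : 1 ≤ a) (hab : a < b) (hbk : b ≤ k)
    (u v : Multiset ℕ) :
    ((u.map (fun j => a + k * j) + v.map (fun j => b + k * j)).filter
        (fun x => x % k = b % k)) = v.map (fun j => b + k * j) := by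
  rw [Multiset.filter_add, Multiset.filter_eq_nil.mpr, Multiset.filter_eq_self.mpr, zero_add]
  · intro x hx
    obtain ⟨j, -, rfl⟩ := Multiset.mem_map.mp hx
    exact Nat.add_mul_mod_self_left b k j
  · intro x hx
    obtain ⟨j, -, rfl⟩ := Multiset.mem_map.mp hx
    exact fun hh => (mod_ab_ne ha hab hbk) ((Nat.add_mul_mod_self_left a k j).symm.trans hh)

lemma summable_side {k c : ℕ} (hk : 0 < k) (hc : 0 < c) (j : Fin 3) :
    Summable (fun u : Multiset ℕ => (MvPowerSeries.X j : S3) ^ (Multiset.card u) *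
      (MvPowerSeries.X 2 : S3) ^ (c * Multiset.card u + k * u.sum)) := by
  apply summable_S3
  intro d
  apply Set.Finite.subset (finite_multisets (d 2) (d 2))
  intro u hu
  simp only [Set.mem_setOf_eq] at hu ⊢
  by_contra hcon
  apply hu
  rw [show (MvPowerSeries.X j : S3) ^ (Multiset.card u) *
      (MvPowerSeries.X 2 : S3) ^ (c * Multiset.card u + k * u.sum) =
      (MvPowerSeries.X 2 : S3) ^ (c * Multiset.card u + k * u.sum) *
        (MvPowerSeries.X j : S3) ^ (Multiset.card u) from by ring]
  apply coeff_X2_pow_mul_eq_zero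
  push_neg at hcon
  rcases Nat.lt_or_ge (d 2) (Multiset.card u) with h1 | h1
  · calc d 2 < Multiset.card u := h1
      _ ≤ c * Multiset.card u := Nat.le_mul_of_pos_left _ hc
      _ ≤ _ := Nat.le_add_right _ _
  · calc d 2 < u.sum := hcon h1
      _ ≤ k * u.sum := Nat.le_mul_of_pos_left _ hk
      _ ≤ _ := Nat.le_add_left _ _

lemma summable_P {k c : ℕ} (hk : 0 < k) (hc : 0 < c) (j : Fin 3) :
    Summable (fun α : ℕ => (MvPowerSeries.X j : S3) ^ α * (MvPowerSeries.X 2 : S3) ^ (c * α) *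
      Ring.inverse (pq (qpoch k α))) := by
  apply summable_S3
  intro d
  apply Set.Finite.subset (Set.finite_Iic (d 2))
  intro α hα
  simp only [Set.mem_setOf_eq] at hα
  simp only [Set.mem_Iic]
  by_contra hcon
  apply hα
  rw [show (MvPowerSeries.X j : S3) ^ α * (MvPowerSeries.X 2 : S3) ^ (c * α) *
      Ring.inverse (pq (qpoch k α)) =
      (MvPowerSeries.X 2 : S3) ^ (c * α) *
        ((MvPowerSeries.X j : S3) ^ α * Ring.inverse (pq (qpoch k α))) from by ring]
  apply coeff_X2_pow_mul_eq_zero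
  push_neg at hcon
  calc d 2 < α := hcon
    _ ≤ c * α := Nat.le_mul_of_pos_left _ hc

lemma summable_PQ {k a b : ℕ} (hk : 0 < k) (ha : 0 < a) (hb : 0 < b) :
    Summable (fun p : ℕ × ℕ =>
      ((MvPowerSeries.X 0 : S3) ^ p.1 * (MvPowerSeries.X 2 : S3) ^ (a * p.1) *
        Ring.inverse (pq (qpoch k p.1))) *
      ((MvPowerSeries.X 1 : S3) ^ p.2 * (MvPowerSeries.X 2 : S3) ^ (b * p.2) *
        Ring.inverse (pq (qpoch k p.2)))) := by
  apply summable_S3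
  intro d
  apply Set.Finite.subset ((Set.finite_Iic (d 2)).prod (Set.finite_Iic (d 2)))
  rintro ⟨α, β⟩ hp
  simp only [Set.mem_setOf_eq] at hp
  simp only [Set.mem_prod, Set.mem_Iic]
  by_contra hcon
  apply hp
  rw [show ((MvPowerSeries.X 0 : S3) ^ α * (MvPowerSeries.X 2 : S3) ^ (a * α) *
        Ring.inverse (pq (qpoch k α))) *
      ((MvPowerSeries.X 1 : S3) ^ β * (MvPowerSeries.X 2 : S3) ^ (b * β) *
        Ring.inverse (pq (qpoch k β))) =
      (MvPowerSeries.X 2 : S3) ^ (a * α + b * β) *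
        ((MvPowerSeries.X 0 : S3) ^ α * Ring.inverse (pq (qpoch k α)) *
          ((MvPowerSeries.X 1 : S3) ^ β * Ring.inverse (pq (qpoch k β)))) from by
      rw [pow_add]; ring]
  apply coeff_X2_pow_mul_eq_zero
  push_neg at hcon
  rcases Nat.lt_or_ge (d 2) α with h1 | h1
  · calc d 2 < α := h1
      _ ≤ a * α := Nat.le_mul_of_pos_left _ ha
      _ ≤ _ := Nat.le_add_right _ _
  · calc d 2 < β := hcon h1
      _ ≤ b * β := Nat.le_mul_of_pos_left _ hb
      _ ≤ _ := Nat.le_add_left _ _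

lemma summable_sideprod {k a b : ℕ} (hk : 0 < k) (ha : 0 < a) (hb : 0 < b) :
    Summable (fun p : Multiset ℕ × Multiset ℕ =>
      ((MvPowerSeries.X 0 : S3) ^ (Multiset.card p.1) *
        (MvPowerSeries.X 2 : S3) ^ (a * Multiset.card p.1 + k * p.1.sum)) *
      ((MvPowerSeries.X 1 : S3) ^ (Multiset.card p.2) *
        (MvPowerSeries.X 2 : S3) ^ (b * Multiset.card p.2 + k * p.2.sum))) := by
  apply summable_S3
  intro d
  apply Set.Finite.subset ((finite_multisets (d 2) (d 2)).prod (finite_multisets (d 2) (d 2)))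
  rintro ⟨u, v⟩ hp
  simp only [Set.mem_setOf_eq] at hp
  simp only [Set.mem_prod, Set.mem_setOf_eq]
  by_contra hcon
  apply hp
  rw [show ((MvPowerSeries.X 0 : S3) ^ (Multiset.card u) *
        (MvPowerSeries.X 2 : S3) ^ (a * Multiset.card u + k * u.sum)) *
      ((MvPowerSeries.X 1 : S3) ^ (Multiset.card v) *
        (MvPowerSeries.X 2 : S3) ^ (b * Multiset.card v + k * v.sum)) =
      (MvPowerSeries.X 2 : S3) ^
        ((a * Multiset.card u + k * u.sum) + (b * Multiset.card v + k * v.sum)) *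
        ((MvPowerSeries.X 0 : S3) ^ (Multiset.card u) *
          (MvPowerSeries.X 1 : S3) ^ (Multiset.card v)) from by
      rw [pow_add]; ring]
  apply coeff_X2_pow_mul_eq_zero
  have hcu : Multiset.card u ≤ a * Multiset.card u := Nat.le_mul_of_pos_left _ ha
  have hsu : u.sum ≤ k * u.sum := Nat.le_mul_of_pos_left _ hk
  have hcv : Multiset.card v ≤ b * Multiset.card v := Nat.le_mul_of_pos_left _ hb
  have hsv : v.sum ≤ k * v.sum := Nat.le_mul_of_pos_left _ hk
  push_neg at hcon
  rcases Nat.lt_or_ge (d 2) (Multiset.card u) with h1 | h1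
  · omega
  · rcases Nat.lt_or_ge (d 2) (u.sum) with h2 | h2
    · omega
    · have := hcon ⟨h1, h2⟩
      omega

end Assembly

section RHS

open MvPowerSeries

def Tfun (a b k : ℕ) : ℕ × ℕ × ℕ → S3 := fun t =>
  Ring.inverse (pq (qpoch k t.1)) *
    ((MvPowerSeries.X 0 : S3) ^ ((t.1 : ℤ) - t.2.1 - t.2.2).toNat *
      (MvPowerSeries.X 1 : S3) ^ (t.2.1 + t.2.2) *
        (MvPowerSeries.X 2 : S3) ^ (t.1 * a + k * t.2.1 ^ 2 + (b - a) * (t.2.1 + t.2.2)) *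
          pq (gauss k ((t.2.1 : ℤ) + t.2.2) t.2.1) *
            pq (gauss k ((t.1 : ℤ) - t.2.1 - t.2.2) t.2.1))

def gfun (a b k : ℕ) : (ℕ × ℕ) × ℕ → S3 := fun w =>
  if w.2 ≤ w.1.2 then Tfun a b k (w.1.1 + w.1.2, w.2, w.1.2 - w.2) else 0

lemma pq_sum {s : Finset ℕ} {f : ℕ → Polynomial ℚ} :
    pq (∑ x ∈ s, f x) = ∑ x ∈ s, pq (f x) := by simp [pq]

lemma Tfun_zero {a b k : ℕ} {m h i : ℕ} (hlt : m < h + i) : Tfun a b k (m, h, i) = 0 := by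
  have hg : gauss k ((m : ℤ) - h - i) h = 0 := by
    rw [gauss, if_neg]
    rintro ⟨h1, h2⟩
    omega
  show Ring.inverse (pq (qpoch k m)) * (_ * _ * _ * _ * pq (gauss k ((m : ℤ) - h - i) h)) = 0
  rw [hg, show pq 0 = 0 from map_zero _, mul_zero, mul_zero]

lemma Tfun_eval {a b k : ℕ} (ha : 1 ≤ a) (hab : a < b) (hbk : b ≤ k)
    {h β : ℕ} (α : ℕ) (hhb : h ≤ β) :
    Tfun a b k (α + β, h, β - h) =
      (Ring.inverse (pq (qpoch k (α+β))) *
        ((MvPowerSeries.X 0 : S3) ^ α * (MvPowerSeries.X 1 : S3) ^ β *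
          (MvPowerSeries.X 2 : S3) ^ (a*α + b*β))) *
      ((MvPowerSeries.X 2 : S3) ^ (k*h^2) * pq (gb k β h) * pq (gb k α h)) := by
  have hk : 0 < k := by omega
  show Ring.inverse (pq (qpoch k (α+β))) *
    ((MvPowerSeries.X 0 : S3) ^ (((α+β : ℕ) : ℤ) - h - (β - h : ℕ)).toNat *
      (MvPowerSeries.X 1 : S3) ^ (h + (β - h)) *
        (MvPowerSeries.X 2 : S3) ^ ((α+β) * a + k * h ^ 2 + (b - a) * (h + (β - h))) *
          pq (gauss k ((h : ℤ) + (β - h : ℕ)) h) *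
            pq (gauss k (((α+β : ℕ) : ℤ) - h - (β - h : ℕ)) h)) = _
  have e1 : ((α+β : ℕ) : ℤ) - (h : ℤ) - ((β - h : ℕ) : ℤ) = ((α : ℕ) : ℤ) := by
    rw [Nat.cast_sub hhb]
    push_cast
    ring
  have e2 : ((h : ℕ) : ℤ) + ((β - h : ℕ) : ℤ) = ((β : ℕ) : ℤ) := by
    rw [Nat.cast_sub hhb]
    ring
  rw [e1, e2, Int.toNat_natCast, gauss_eq_gb hk β h, gauss_eq_gb hk α h,
    show h + (β - h) = β from by omega]
  have hexp : (α+β) * a + k * h ^ 2 + (b - a) * β = (a*α + b*β) + k * h ^ 2 := by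
    have h2 : (b-a)*β + a*β = b*β := by
      rw [← Nat.add_mul, Nat.sub_add_cancel (le_of_lt hab)]
    calc (α+β) * a + k * h ^ 2 + (b - a) * β
        = α*a + k*h^2 + ((b-a)*β + a*β) := by ring
      _ = α*a + k*h^2 + b*β := by rw [h2]
      _ = (a*α + b*β) + k * h ^ 2 := by ring
  rw [hexp, pow_add]
  ring

lemma sum_eval {a b k : ℕ} (ha : 1 ≤ a) (hab : a < b) (hbk : b ≤ k) (α β : ℕ) :
    ∑ h ∈ Finset.range (β+1), Tfun a b k (α + β, h, β - h) =
      ((MvPowerSeries.X 0 : S3) ^ α * (MvPowerSeries.X 2 : S3) ^ (a * α) *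
        Ring.inverse (pq (qpoch k α))) *
      ((MvPowerSeries.X 1 : S3) ^ β * (MvPowerSeries.X 2 : S3) ^ (b * β) *
        Ring.inverse (pq (qpoch k β))) := by
  have hk : 0 < k := by omega
  rw [Finset.sum_congr rfl (fun h hh => Tfun_eval ha hab hbk α
    (by simp only [Finset.mem_range] at hh; omega)), ← Finset.mul_sum]
  have hv : ∑ h ∈ Finset.range (β+1),
      ((MvPowerSeries.X 2 : S3) ^ (k*h^2) * pq (gb k β h) * pq (gb k α h)) =
      pq (gb k (α+β) β) := by
    rw [← vander hk α β, pq_sum]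
    refine Finset.sum_congr rfl fun h _ => ?_
    rw [pq_mul, pq_mul, pq_X_pow]
  rw [hv]
  rw [show (Ring.inverse (pq (qpoch k (α+β))) *
      ((MvPowerSeries.X 0 : S3) ^ α * (MvPowerSeries.X 1 : S3) ^ β *
        (MvPowerSeries.X 2 : S3) ^ (a*α + b*β))) * pq (gb k (α+β) β) =
      (Ring.inverse (pq (qpoch k (α+β))) * pq (gb k (α+β) β)) *
        ((MvPowerSeries.X 0 : S3) ^ α * (MvPowerSeries.X 1 : S3) ^ β *
          (MvPowerSeries.X 2 : S3) ^ (a*α + b*β)) from by ring,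
    inverse_qpoch_split hk α β, pow_add]
  ring

lemma summable_gfun {a b k : ℕ} (ha : 1 ≤ a) (hab : a < b) (hbk : b ≤ k) :
    Summable (gfun a b k) := by
  have hk : 0 < k := by omega
  apply summable_S3
  intro d
  apply Set.Finite.subset (((Set.finite_Iic (d 2)).prod (Set.finite_Iic (d 2))).prod
    (Set.finite_Iic (d 2)))
  rintro ⟨⟨α, β⟩, h⟩ hw
  simp only [Set.mem_setOf_eq] at hw
  have hhb : h ≤ β := by
    by_contra hcon
    apply hw
    rw [show gfun a b k ((α, β), h) = 0 from if_neg hcon, map_zero]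
  rw [show gfun a b k ((α, β), h) = Tfun a b k (α + β, h, β - h) from if_pos hhb] at hw
  have hE : (α+β) * a + k * h ^ 2 + (b - a) * (h + (β - h)) ≤ d 2 := by
    by_contra hcon
    apply hw
    rw [show Tfun a b k (α + β, h, β - h) =
        (MvPowerSeries.X 2 : S3) ^ ((α+β) * a + k * h ^ 2 + (b - a) * (h + (β - h))) *
        (Ring.inverse (pq (qpoch k (α+β))) *
          ((MvPowerSeries.X 0 : S3) ^ (((α+β : ℕ) : ℤ) - h - (β - h : ℕ)).toNat *
            (MvPowerSeries.X 1 : S3) ^ (h + (β - h)) *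
              pq (gauss k ((h : ℤ) + (β - h : ℕ)) h) *
                pq (gauss k (((α+β : ℕ) : ℤ) - h - (β - h : ℕ)) h))) from by
      show Ring.inverse (pq (qpoch k (α+β))) * (_ * _ * _ * _ * _) = _
      ring]
    exact coeff_X2_pow_mul_eq_zero (by omega)
  have h1 : α + β ≤ (α+β) * a := Nat.le_mul_of_pos_right _ (by omega)
  refine ⟨⟨?_, ?_⟩, ?_⟩ <;> simp only [Set.mem_Iic] <;> omega

lemma rhs_eq {a b k : ℕ} (ha : 1 ≤ a) (hab : a < b) (hbk : b ≤ k) :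
    (∑' t : ℕ × ℕ × ℕ, Tfun a b k t) =
      ∑' p : ℕ × ℕ,
        ((MvPowerSeries.X 0 : S3) ^ p.1 * (MvPowerSeries.X 2 : S3) ^ (a * p.1) *
          Ring.inverse (pq (qpoch k p.1))) *
        ((MvPowerSeries.X 1 : S3) ^ p.2 * (MvPowerSeries.X 2 : S3) ^ (b * p.2) *
          Ring.inverse (pq (qpoch k p.2))) := by
  have hk : 0 < k := by omega
  have hbij : (∑' t : ℕ × ℕ × ℕ, Tfun a b k t) = ∑' w : (ℕ × ℕ) × ℕ, gfun a b k w := by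
    apply tsum_eq_tsum_of_ne_zero_bij
      (fun x => (x.1.1.1 + x.1.1.2, x.1.2, x.1.1.2 - x.1.2))
    · rintro ⟨⟨⟨α, β⟩, h⟩, hx⟩ ⟨⟨⟨α', β'⟩, h'⟩, hx'⟩ heq
      have hhb : h ≤ β := by
        by_contra hcon
        exact hx (if_neg hcon)
      have hhb' : h' ≤ β' := by
        by_contra hcon
        exact hx' (if_neg hcon)
      simp only [Prod.mk.injEq] at heq
      obtain ⟨e1, e2, e3⟩ := heq
      apply Subtype.ext
      simp only [Prod.mk.injEq]
      refine ⟨⟨?_, ?_⟩, ?_⟩ <;> omega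
    · rintro ⟨m, h, i⟩ ht
      have hhi : h + i ≤ m := by
        by_contra hcon
        exact ht (Tfun_zero (by omega))
      refine ⟨⟨((m - h - i, h + i), h), ?_⟩, ?_⟩
      · show gfun a b k ((m - h - i, h + i), h) ≠ 0
        rw [show gfun a b k ((m - h - i, h + i), h) =
          Tfun a b k ((m - h - i) + (h + i), h, (h + i) - h) from if_pos (by dsimp only; omega),
          show (m - h - i) + (h + i) = m from by omega, show (h + i) - h = i from by omega]
        exact ht
      · show ((m - h - i) + (h + i), h, (h + i) - h) = (m, h, i)
        simp only [Prod.mk.injEq]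
        refine ⟨by omega, trivial, by omega⟩
    · rintro ⟨⟨⟨α, β⟩, h⟩, hx⟩
      have hhb : h ≤ β := by
        by_contra hcon
        exact hx (if_neg hcon)
      show Tfun a b k (α + β, h, β - h) = gfun a b k ((α, β), h)
      rw [show gfun a b k ((α, β), h) = Tfun a b k (α + β, h, β - h) from if_pos hhb]
  rw [hbij]
  have hslice : ∀ p : ℕ × ℕ, Summable (fun h : ℕ => gfun a b k (p, h)) := by
    intro p
    apply summable_of_ne_finset_zero (s := Finset.range (p.2 + 1))
    intro h hh
    simp only [Finset.mem_range] at hh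
    exact if_neg (by dsimp only; omega)
  have hps := Summable.tsum_prod' (summable_gfun ha hab hbk) hslice
  rw [hps]
  refine tsum_congr fun p => ?_
  obtain ⟨α, β⟩ := p
  have hvanish : ∀ h ∉ Finset.range (β+1), gfun a b k ((α, β), h) = 0 :=
    fun h hh => if_neg (by simp only [Finset.mem_range] at hh; dsimp only; omega)
  have hinner : ∑' h : ℕ, gfun a b k ((α, β), h) =
      ∑ h ∈ Finset.range (β+1), Tfun a b k (α + β, h, β - h) := by
    rw [tsum_eq_sum hvanish]
    exact Finset.sum_congr rfl fun h hh =>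
      if_pos (by simp only [Finset.mem_range] at hh; dsimp only; omega)
  rw [hinner, sum_eval ha hab hbk α β]

end RHS

section Final

open MvPowerSeries

lemma lhs_eq {a b k : ℕ} (ha : 1 ≤ a) (hab : a < b) (hbk : b ≤ k) :
    ∑' π : {π : Multiset ℕ // ∀ x ∈ π, 0 < x ∧ (x % k = a % k ∨ x % k = b % k)},
        (MvPowerSeries.X 0 : S3) ^ (π.1.filter (fun x => x % k = a % k)).card *
          (MvPowerSeries.X 1 : S3) ^ (π.1.filter (fun x => x % k = b % k)).card *
            (MvPowerSeries.X 2 : S3) ^ π.1.sum =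
    (∑' u : Multiset ℕ, (MvPowerSeries.X 0 : S3) ^ (Multiset.card u) *
        (MvPowerSeries.X 2 : S3) ^ (a * Multiset.card u + k * u.sum)) *
      (∑' v : Multiset ℕ, (MvPowerSeries.X 1 : S3) ^ (Multiset.card v) *
        (MvPowerSeries.X 2 : S3) ^ (b * Multiset.card v + k * v.sum)) := by
  have hk : 0 < k := by omega
  have hb' : 0 < b := by omega
  rw [← Equiv.tsum_eq (partEquiv ha hab hbk)]
  have hterm : ∀ p : Multiset ℕ × Multiset ℕ,
      (MvPowerSeries.X 0 : S3) ^
          (((partEquiv ha hab hbk p).1.filter (fun x => x % k = a % k)).card) *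
        (MvPowerSeries.X 1 : S3) ^
          (((partEquiv ha hab hbk p).1.filter (fun x => x % k = b % k)).card) *
          (MvPowerSeries.X 2 : S3) ^ ((partEquiv ha hab hbk p).1.sum) =
      ((MvPowerSeries.X 0 : S3) ^ (Multiset.card p.1) *
        (MvPowerSeries.X 2 : S3) ^ (a * Multiset.card p.1 + k * p.1.sum)) *
      ((MvPowerSeries.X 1 : S3) ^ (Multiset.card p.2) *
        (MvPowerSeries.X 2 : S3) ^ (b * Multiset.card p.2 + k * p.2.sum)) := by
    rintro ⟨u, v⟩
    show (MvPowerSeries.X 0 : S3) ^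
        (((u.map (fun j => a + k * j) + v.map (fun j => b + k * j)).filter
          (fun x => x % k = a % k)).card) *
      (MvPowerSeries.X 1 : S3) ^
        (((u.map (fun j => a + k * j) + v.map (fun j => b + k * j)).filter
          (fun x => x % k = b % k)).card) *
        (MvPowerSeries.X 2 : S3) ^
          ((u.map (fun j => a + k * j) + v.map (fun j => b + k * j)).sum) = _
    rw [filter_a_eq ha hab hbk u v, filter_b_eq ha hab hbk u v, Multiset.card_map,
      Multiset.card_map, Multiset.sum_add, sum_map_affine, sum_map_affine, pow_add]
    ring
  rw [tsum_congr hterm]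
  have hslice : ∀ u : Multiset ℕ, Summable (fun v : Multiset ℕ =>
      ((MvPowerSeries.X 0 : S3) ^ (Multiset.card u) *
        (MvPowerSeries.X 2 : S3) ^ (a * Multiset.card u + k * u.sum)) *
      ((MvPowerSeries.X 1 : S3) ^ (Multiset.card v) *
        (MvPowerSeries.X 2 : S3) ^ (b * Multiset.card v + k * v.sum))) :=
    fun u => Summable.mul_left _ (summable_side hk hb' 1)
  have hps := Summable.tsum_prod' (summable_sideprod hk ha hb') hslice
  rw [hps]
  dsimp only
  rw [tsum_congr (fun u => Summable.tsum_mul_left _ (summable_side hk hb' 1))]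
  rw [Summable.tsum_mul_right _ (summable_side hk ha 0)]

end Final


open MvPowerSeries in
/-- the generating function ∑ μ^{ℓ_a(π)} ν^{ℓ_b(π)} q^{|π|} over
partitions π with all parts ≡ a or b (mod k), with μ = X 0, ν = X 1, q = X 2,
equals ∑_{m,h,i ≥ 0} μ^{m-h-i} ν^{h+i} q^{ma+kh²+(b-a)(h+i)} / (q^k;q^k)_m
· [h+i, h]_{q^k} · [m-h-i, h]_{q^k}. -/
theorem stmt4 (a b k : ℕ) (ha : 1 ≤ a) (hab : a < b) (hbk : b ≤ k) :
    ∑' π : {π : Multiset ℕ // ∀ x ∈ π, 0 < x ∧ (x % k = a % k ∨ x % k = b % k)},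
        (X 0 : S3) ^ (π.1.filter (fun x => x % k = a % k)).card *
          (X 1 : S3) ^ (π.1.filter (fun x => x % k = b % k)).card *
            (X 2 : S3) ^ π.1.sum =
      ∑' t : ℕ × ℕ × ℕ,
        Ring.inverse (pq (qpoch k t.1)) *
          ((X 0 : S3) ^ ((t.1 : ℤ) - t.2.1 - t.2.2).toNat *
            (X 1 : S3) ^ (t.2.1 + t.2.2) *
              (X 2 : S3) ^ (t.1 * a + k * t.2.1 ^ 2 + (b - a) * (t.2.1 + t.2.2)) *
                pq (gauss k ((t.2.1 : ℤ) + t.2.2) t.2.1) *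
                  pq (gauss k ((t.1 : ℤ) - t.2.1 - t.2.2) t.2.1)) := by
  have hk : 0 < k := by omega
  have hb' : 0 < b := by omega
  have hT : (∑' t : ℕ × ℕ × ℕ,
      Ring.inverse (pq (qpoch k t.1)) *
        ((X 0 : S3) ^ ((t.1 : ℤ) - t.2.1 - t.2.2).toNat *
          (X 1 : S3) ^ (t.2.1 + t.2.2) *
            (X 2 : S3) ^ (t.1 * a + k * t.2.1 ^ 2 + (b - a) * (t.2.1 + t.2.2)) *
              pq (gauss k ((t.2.1 : ℤ) + t.2.2) t.2.1) *
                pq (gauss k ((t.1 : ℤ) - t.2.1 - t.2.2) t.2.1))) =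
      ∑' t : ℕ × ℕ × ℕ, Tfun a b k t := rfl
  rw [hT, rhs_eq ha hab hbk, lhs_eq ha hab hbk, side_sum hk ha 0, side_sum hk hb' 1]
  have hslice : ∀ α : ℕ, Summable (fun β : ℕ =>
      ((MvPowerSeries.X 0 : S3) ^ α * (MvPowerSeries.X 2 : S3) ^ (a * α) *
        Ring.inverse (pq (qpoch k α))) *
      ((MvPowerSeries.X 1 : S3) ^ β * (MvPowerSeries.X 2 : S3) ^ (b * β) *
        Ring.inverse (pq (qpoch k β)))) :=
    fun α => Summable.mul_left _ (summable_P hk hb' 1)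
  have hps := Summable.tsum_prod' (summable_PQ hk ha hb') hslice
  rw [hps]
  dsimp only
  rw [tsum_congr (fun α => Summable.tsum_mul_left _ (summable_P hk hb' 1))]
  rw [Summable.tsum_mul_right _ (summable_P hk ha 0)]
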